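/- For all k, k′ ∈ N₂, m ∈ L_{k,2} and m′ ∈ L_{k′,2}: ∫₀¹ w_{k,m,2}(x) · w_{k′,m′,2}(x) dx = 1 if (k,m) = (k′,m′) and = 0 otherwise. In particular, the order-2 localized Walsh functions form an orthonormal system in L²([0,1)). -/

import Mathlib

open scoped Classical
open MeasureTheory

noncomputable section

/-- The binary digit `ξ_{i+1}` of `x ∈ [0,1)`. -/
def rdigit (x : ℝ) (i : ℕ) : ℕ := (⌊x * 2 ^ (i + 1)⌋).toNat % 2

/-- The `k`-th Walsh function in base `2`. -/
def walsh (k : ℕ) (x : ℝ) : ℝ :=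
  (-1 : ℝ) ^ ∑ i ∈ Finset.range (Nat.size k), (Nat.testBit k i).toNat * rdigit x i

/-- `k` is a sum of two distinct powers of two, i.e. `k ∈ N₂ ∖ N₁`. -/
def twoBit (k : ℕ) : Prop := ∃ a₁ a₂ : ℕ, a₂ < a₁ ∧ k = 2 ^ a₁ + 2 ^ a₂

/-- `k ∈ N₁`, i.e. `k = 0` or `k` is a power of two. -/
def inN1 (k : ℕ) : Prop := k = 0 ∨ ∃ a : ℕ, k = 2 ^ a

/-- `k ∈ N₂`. -/
def inN2 (k : ℕ) : Prop := inN1 k ∨ twoBit k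

/-- For `k = 2^{a₁} + 2^{a₂}` with `a₁ > a₂`, this is the smaller exponent `a₂`. -/
def lowExp (k : ℕ) : ℕ := Nat.log2 (k % 2 ^ Nat.log2 k)

/-- The index set `L_{k,2}`. -/
def L2 (k : ℕ) : Set ℕ := if twoBit k then {m | m < 2 ^ lowExp k} else {0}

/-- The order-2 localized Walsh function `w_{k,m,2}`. -/
def w2 (k m : ℕ) (x : ℝ) : ℝ :=
  if twoBit k then
    Real.sqrt (2 ^ lowExp k) *
      Set.indicator (Set.Ico ((m : ℝ) / 2 ^ lowExp k) (((m : ℝ) + 1) / 2 ^ lowExp k))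
        (fun _ => (1:ℝ)) x *
      walsh k x
  else walsh k x

/-! ### Auxiliary development -/

/-- Discrete exponent for the piece value of `walsh k` on the `j`-th dyadic interval. -/
def ebit (k N j : ℕ) : ℕ :=
  ∑ i ∈ Finset.range N, (Nat.testBit k i).toNat * (Nat.testBit j (N - 1 - i)).toNat

/-- Value of `w2 k m` on the `j`-th dyadic interval of generation `N`. -/
def pieceVal (k m N j : ℕ) : ℝ :=
  (if twoBit k then
      Real.sqrt (2 ^ lowExp k) * (if j / 2 ^ (N - lowExp k) = m then (1:ℝ) else 0)
    else 1) * (-1 : ℝ) ^ ebit k N j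

lemma nat_div_eq_iff {j d q : ℕ} (hd : 0 < d) : j / d = q ↔ q * d ≤ j ∧ j < (q + 1) * d := by
  constructor
  · rintro rfl
    refine ⟨Nat.div_mul_le_self j d, ?_⟩
    have h1 := Nat.div_add_mod j d
    have h2 := Nat.mod_lt j hd
    calc j = d * (j / d) + j % d := h1.symm
    _ < d * (j / d) + d := by omega
    _ = (j / d + 1) * d := by ring
  · rintro ⟨ha, hb⟩
    exact Nat.div_eq_of_lt_le ha hb

lemma rdigit_piece {N j i : ℕ} (hi : i < N) (hj : j < 2 ^ N) {x : ℝ}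
    (hx : x ∈ Set.Ico ((j : ℝ) / 2 ^ N) (((j : ℝ) + 1) / 2 ^ N)) :
    rdigit x i = (Nat.testBit j (N - 1 - i)).toNat := by
  obtain ⟨hx1, hx2⟩ := hx
  set d : ℕ := 2 ^ (N - 1 - i) with hd
  have hdpos : 0 < d := Nat.pow_pos (by norm_num)
  have hNd : (2 : ℝ) ^ N = (d : ℝ) * 2 ^ (i + 1) := by
    rw [hd]
    push_cast
    rw [← pow_add]
    congr 1
    omega
  have hkey : ⌊x * 2 ^ (i + 1)⌋ = (j / d : ℕ) := by
    rw [Int.floor_eq_iff]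
    constructor
    · calc ((j / d : ℕ) : ℝ) ≤ (j : ℝ) / (d : ℝ) := by
            rw [le_div_iff₀ (by positivity)]
            exact_mod_cast Nat.div_mul_le_self j d
      _ = (j : ℝ) / 2 ^ N * 2 ^ (i + 1) := by
            rw [hNd]; field_simp
      _ ≤ x * 2 ^ (i + 1) := by
            apply mul_le_mul_of_nonneg_right hx1 (by positivity)
    · push_cast
      calc x * 2 ^ (i + 1) < ((j : ℝ) + 1) / 2 ^ N * 2 ^ (i + 1) := by
            apply mul_lt_mul_of_pos_right hx2 (by positivity)
      _ = ((j : ℝ) + 1) / d := by rw [hNd]; field_simp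
      _ ≤ (j / d : ℕ) + 1 := by
            rw [div_le_iff₀ (by positivity)]
            have : (j : ℕ) + 1 ≤ (j / d + 1) * d := by
              have h1 := Nat.div_add_mod j d
              have h2 := Nat.mod_lt j hdpos
              nlinarith
            calc (j : ℝ) + 1 ≤ (((j / d + 1) * d : ℕ) : ℝ) := by exact_mod_cast this
            _ = ((j / d : ℕ) + 1) * d := by push_cast; ring
  rw [rdigit, hkey]
  simp only [Int.toNat_natCast]
  rw [Nat.testBit_eq_decide_div_mod_eq]
  rcases Nat.mod_two_eq_zero_or_one (j / d) with h | h <;> rw [← hd, h] <;> simp [h]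

lemma walsh_piece {k N j : ℕ} (hk : Nat.size k ≤ N) (hj : j < 2 ^ N) {x : ℝ}
    (hx : x ∈ Set.Ico ((j : ℝ) / 2 ^ N) (((j : ℝ) + 1) / 2 ^ N)) :
    walsh k x = (-1 : ℝ) ^ ebit k N j := by
  rw [walsh, ebit]
  congr 1
  rw [Finset.sum_subset (Finset.range_subset_range.2 hk)]
  · apply Finset.sum_congr rfl
    intro i hi
    rw [rdigit_piece (by
      have := Finset.mem_range.1 hi
      omega) hj hx]
  · intro i hiN hik
    have : Nat.testBit k i = false := by
      apply Nat.testBit_eq_false_of_lt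
      calc k < 2 ^ Nat.size k := Nat.lt_size_self k
      _ ≤ 2 ^ i := by
        apply Nat.pow_le_pow_right (by norm_num)
        simpa using hik
    simp [this]

lemma indicator_piece {N a j m : ℕ} (ha : a ≤ N) (hj : j < 2 ^ N) {x : ℝ}
    (hx : x ∈ Set.Ico ((j : ℝ) / 2 ^ N) (((j : ℝ) + 1) / 2 ^ N)) :
    x ∈ Set.Ico ((m : ℝ) / 2 ^ a) (((m : ℝ) + 1) / 2 ^ a) ↔ j / 2 ^ (N - a) = m := by
  obtain ⟨hx1, hx2⟩ := hx
  set d : ℕ := 2 ^ (N - a) with hd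
  have hdpos : 0 < d := Nat.pow_pos (by norm_num)
  have hNd : (2 : ℝ) ^ N = (d : ℝ) * 2 ^ a := by
    rw [hd]; push_cast; rw [← pow_add]; congr 1; omega
  have h2a : (0:ℝ) < 2 ^ a := by positivity
  have h2N : (0:ℝ) < 2 ^ N := by positivity
  rw [nat_div_eq_iff hdpos]
  constructor
  · rintro ⟨hy1, hy2⟩
    constructor
    · -- m * d ≤ j
      have : (m : ℝ) / 2 ^ a < ((j : ℝ) + 1) / 2 ^ N := lt_of_le_of_lt hy1 hx2
      rw [div_lt_div_iff₀ h2a h2N, hNd] at this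
      have : (m : ℝ) * d < (j : ℝ) + 1 := by nlinarith
      have : (m * d : ℕ) < j + 1 := by exact_mod_cast (by push_cast; linarith : ((m*d : ℕ) : ℝ) < ((j + 1 : ℕ) : ℝ))
      omega
    · -- j < (m+1) * d
      have : (j : ℝ) / 2 ^ N < ((m : ℝ) + 1) / 2 ^ a := lt_of_le_of_lt hx1 hy2
      rw [div_lt_div_iff₀ h2N h2a, hNd] at this
      have : (j : ℝ) < ((m : ℝ) + 1) * d := by nlinarith
      exact_mod_cast (by push_cast; linarith : ((j : ℕ) : ℝ) < (((m+1) * d : ℕ) : ℝ))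
  · rintro ⟨hy1, hy2⟩
    constructor
    · calc (m : ℝ) / 2 ^ a = (m : ℝ) * d / 2 ^ N := by rw [hNd]; field_simp
      _ ≤ (j : ℝ) / 2 ^ N := by
          gcongr
          have : ((m * d : ℕ) : ℝ) ≤ (j : ℝ) := Nat.cast_le.2 hy1
          push_cast at this; linarith
      _ ≤ x := hx1
    · calc x < ((j : ℝ) + 1) / 2 ^ N := hx2
      _ ≤ ((m : ℝ) + 1) * d / 2 ^ N := by
          gcongr
          have : ((j + 1 : ℕ) : ℝ) ≤ (((m + 1) * d : ℕ) : ℝ) := Nat.cast_le.2 hy2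
          push_cast at this; linarith
      _ = ((m : ℝ) + 1) / 2 ^ a := by rw [hNd]; field_simp

lemma w2_piece {k m N j : ℕ} (hk : Nat.size k ≤ N) (hlow : twoBit k → lowExp k ≤ N)
    (hj : j < 2 ^ N) {x : ℝ}
    (hx : x ∈ Set.Ico ((j : ℝ) / 2 ^ N) (((j : ℝ) + 1) / 2 ^ N)) :
    w2 k m x = pieceVal k m N j := by
  rw [w2, pieceVal]
  by_cases ht : twoBit k
  · simp only [ht, if_true]
    rw [walsh_piece hk hj hx]
    congr 1
    congr 1
    rw [Set.indicator_apply]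
    rw [if_congr (indicator_piece (hlow ht) hj hx) rfl rfl]
  · simp only [ht, if_false]
    rw [walsh_piece hk hj hx, one_mul]

lemma integral_eq_sum {f : ℝ → ℝ} {N : ℕ} {v : ℕ → ℝ}
    (h : ∀ (j : ℕ), j < 2 ^ N → ∀ x ∈ Set.Ico ((j : ℝ) / 2 ^ N) (((j : ℝ) + 1) / 2 ^ N), f x = v j) :
    ∫ x in (0:ℝ)..1, f x = (∑ j ∈ Finset.range (2 ^ N), v j) / 2 ^ N := by
  set a : ℕ → ℝ := fun i => (i : ℝ) / 2 ^ N with ha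
  have h2N : (0:ℝ) < 2 ^ N := by positivity
  have hle : ∀ i : ℕ, a i ≤ a (i + 1) := by
    intro i; rw [ha]; push_cast; gcongr; linarith
  have hae : ∀ j : ℕ, j < 2 ^ N →
      f =ᵐ[volume.restrict (Set.Ioc (a j) (a (j + 1)))] fun _ => v j := by
    intro j hj
    rw [Filter.EventuallyEq, ae_restrict_iff' measurableSet_Ioc]
    have hne : ∀ᵐ (y : ℝ), y ≠ a (j + 1) := by
      rw [MeasureTheory.ae_iff]
      have : {y : ℝ | ¬y ≠ a (j + 1)} = {a (j + 1)} := by ext y; simp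
      rw [this, Real.volume_singleton]
    filter_upwards [hne] with y hy hmem
    refine h j hj y ⟨le_of_lt hmem.1, ?_⟩
    have : (a (j+1) : ℝ) = ((j : ℝ) + 1) / 2 ^ N := by rw [ha]; push_cast; ring_nf
    rw [← this]
    exact lt_of_le_of_ne hmem.2 hy
  have hint : ∀ j : ℕ, j < 2 ^ N → IntervalIntegrable f volume (a j) (a (j + 1)) := by
    intro j hj
    rw [intervalIntegrable_iff, Set.uIoc_of_le (hle j)]
    exact (integrableOn_const measure_Ioc_lt_top.ne).congr (hae j hj).symm
  have key := intervalIntegral.sum_integral_adjacent_intervals (μ := volume) (a := a)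
    (n := 2 ^ N) hint
  have ha0 : a 0 = 0 := by simp [ha]
  have haN : a (2 ^ N) = 1 := by
    rw [ha]; push_cast; field_simp
  rw [ha0, haN] at key
  rw [← key]
  have hpiece : ∀ j : ℕ, j < 2 ^ N →
      (∫ x in (a j)..(a (j+1)), f x) = v j / 2 ^ N := by
    intro j hj
    have hcg : (∫ x in (a j)..(a (j+1)), f x) = ∫ _x in (a j)..(a (j+1)), v j := by
      apply intervalIntegral.integral_congr_ae
      simp only [Set.uIoc_of_le (hle j)]
      exact (ae_restrict_iff' measurableSet_Ioc).1 (hae j hj)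
    rw [hcg, intervalIntegral.integral_const, smul_eq_mul]
    have : a (j + 1) - a j = 1 / 2 ^ N := by
      rw [ha]; push_cast; field_simp; ring
    rw [this]; ring
  rw [Finset.sum_congr rfl (fun j hj => hpiece j (Finset.mem_range.1 hj)), ← Finset.sum_div]

/-! ### Bit arithmetic helpers -/

lemma testBit_twoBit {a₁ a₂ t : ℕ} (h : a₂ < a₁) :
    (2 ^ a₁ + 2 ^ a₂).testBit t = decide (t = a₁ ∨ t = a₂) := by
  rcases lt_trichotomy t a₁ with ht | rfl | ht
  · rw [Nat.testBit_two_pow_add_gt ht, Nat.testBit_two_pow]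
    have h1 : t ≠ a₁ := ht.ne
    by_cases h2 : t = a₂ <;> simp [h1, h2] <;> omega
  · rw [Nat.testBit_two_pow_add_eq, Nat.testBit_two_pow]
    simp [h.ne]
  · have hlt : (2:ℕ) ^ a₁ + 2 ^ a₂ < 2 ^ t := by
      have h1 : (2:ℕ) ^ a₂ < 2 ^ a₁ := Nat.pow_lt_pow_right (by norm_num) h
      have h2 : (2:ℕ) ^ a₁ * 2 ≤ 2 ^ t := by
        calc (2:ℕ) ^ a₁ * 2 = 2 ^ (a₁ + 1) := by ring
        _ ≤ 2 ^ t := Nat.pow_le_pow_right (by norm_num) ht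
      omega
    rw [Nat.testBit_eq_false_of_lt hlt]
    have h1 : t ≠ a₁ := ht.ne'
    have h2 : t ≠ a₂ := by omega
    simp [h1, h2]

lemma size_twoBit {a₁ a₂ : ℕ} (h : a₂ < a₁) : (2 ^ a₁ + 2 ^ a₂).size = a₁ + 1 := by
  apply le_antisymm
  · rw [Nat.size_le]
    have h1 : (2:ℕ) ^ a₂ < 2 ^ a₁ := Nat.pow_lt_pow_right (by norm_num) h
    have h2 : (2:ℕ) ^ (a₁ + 1) = 2 ^ a₁ * 2 := by ring
    omega
  · rw [Nat.succ_le_iff, Nat.lt_size]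
    exact Nat.le_add_right _ _

lemma lowExp_twoBit {a₁ a₂ : ℕ} (h : a₂ < a₁) : lowExp (2 ^ a₁ + 2 ^ a₂) = a₂ := by
  have h1 : (2:ℕ) ^ a₂ < 2 ^ a₁ := Nat.pow_lt_pow_right (by norm_num) h
  have hlog : Nat.log2 (2 ^ a₁ + 2 ^ a₂) = a₁ := by
    rw [Nat.log2_eq_log_two]
    apply Nat.log_eq_of_pow_le_of_lt_pow (Nat.le_add_right _ _)
    have : (2:ℕ) ^ (a₁ + 1) = 2 ^ a₁ * 2 := by ring
    omega
  rw [lowExp, hlog, Nat.add_mod_left, Nat.mod_eq_of_lt h1, Nat.log2_eq_log_two,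
    Nat.log_pow (by norm_num)]

lemma not_twoBit_pow (a : ℕ) : ¬ twoBit (2 ^ a) := by
  rintro ⟨b₁, b₂, hlt, heq⟩
  have h1 : (2 ^ a : ℕ).testBit b₁ = true := by
    rw [heq, testBit_twoBit hlt]; simp
  have h2 : (2 ^ a : ℕ).testBit b₂ = true := by
    rw [heq, testBit_twoBit hlt]; simp
  rw [Nat.testBit_two_pow] at h1 h2
  simp only [decide_eq_true_eq] at h1 h2
  omega

lemma not_twoBit_zero : ¬ twoBit 0 := by
  rintro ⟨b₁, b₂, hlt, heq⟩
  have h1 : 0 < 2 ^ b₁ := Nat.pow_pos (show 0 < 2 by norm_num)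
  have h2 : 0 < 2 ^ b₂ := Nat.pow_pos (show 0 < 2 by norm_num)
  omega

lemma lowExp_lt_size {k : ℕ} (ht : twoBit k) : lowExp k + 1 < Nat.size k := by
  obtain ⟨a₁, a₂, h, rfl⟩ := ht
  rw [lowExp_twoBit h, size_twoBit h]
  omega

lemma xor_two_pow_lt {j b N : ℕ} (hb : b < N) (hj : j < 2 ^ N) : j ^^^ 2 ^ b < 2 ^ N := by
  apply Nat.lt_pow_two_of_testBit
  intro i hi
  rw [Nat.testBit_xor, Nat.testBit_two_pow]
  have h1 : j.testBit i = false := Nat.testBit_eq_false_of_lt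
    (lt_of_lt_of_le hj (Nat.pow_le_pow_right (by norm_num) hi))
  have h2 : b ≠ i := by omega
  simp [h1, h2]

lemma div_xor {j b c : ℕ} (h : b < c) : (j ^^^ 2 ^ b) / 2 ^ c = j / 2 ^ c := by
  apply Nat.eq_of_testBit_eq
  intro i
  rw [← Nat.shiftRight_eq_div_pow, ← Nat.shiftRight_eq_div_pow, Nat.testBit_shiftRight,
    Nat.testBit_shiftRight, Nat.testBit_xor, Nat.testBit_two_pow]
  have : b ≠ c + i := by omega
  simp [this]

lemma ebit_xor_flip {k N j p : ℕ} (hp : p < N) :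
    (-1 : ℝ) ^ ebit k N (j ^^^ 2 ^ (N - 1 - p)) =
      (-1 : ℝ) ^ ebit k N j * (-1 : ℝ) ^ (Nat.testBit k p).toNat := by
  set b := N - 1 - p with hb
  have hsplit : ∀ j' : ℕ, ebit k N j' = (k.testBit p).toNat * (j'.testBit b).toNat +
      ∑ i ∈ (Finset.range N).erase p, (k.testBit i).toNat * (j'.testBit (N - 1 - i)).toNat := by
    intro j'
    rw [ebit, ← Finset.add_sum_erase _ _ (Finset.mem_range.2 hp)]
  have hflip : (j ^^^ 2 ^ b).testBit b = !(j.testBit b) := by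
    rw [Nat.testBit_xor, Nat.testBit_two_pow]; simp
  have hsame : ∑ i ∈ (Finset.range N).erase p,
        (k.testBit i).toNat * ((j ^^^ 2 ^ b).testBit (N - 1 - i)).toNat
      = ∑ i ∈ (Finset.range N).erase p,
        (k.testBit i).toNat * (j.testBit (N - 1 - i)).toNat := by
    apply Finset.sum_congr rfl
    intro i hi
    have hi1 : i ≠ p := (Finset.mem_erase.1 hi).1
    have hi2 : i < N := Finset.mem_range.1 (Finset.mem_erase.1 hi).2
    rw [Nat.testBit_xor, Nat.testBit_two_pow]
    have : b ≠ N - 1 - i := by omega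
    simp [this]
  rw [hsplit, hsplit, hflip, hsame, pow_add, pow_add]
  have hkey : (-1:ℝ) ^ ((k.testBit p).toNat * (!(j.testBit b)).toNat) =
      (-1:ℝ) ^ ((k.testBit p).toNat * (j.testBit b).toNat) * (-1) ^ (k.testBit p).toNat := by
    rcases k.testBit p <;> rcases j.testBit b <;> norm_num
  rw [hkey]; ring

lemma sum_indicator_div {N a mm : ℕ} (ha : a ≤ N) (hmm : mm < 2 ^ a) :
    ∑ j ∈ Finset.range (2 ^ N), (if j / 2 ^ (N - a) = mm then (1:ℝ) else 0) = 2 ^ (N - a) := by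
  rw [Finset.sum_boole]
  have hd : 0 < 2 ^ (N - a) := Nat.pow_pos (by norm_num)
  have hset : (Finset.range (2 ^ N)).filter (fun j => j / 2 ^ (N - a) = mm) =
      Finset.Ico (mm * 2 ^ (N - a)) ((mm + 1) * 2 ^ (N - a)) := by
    ext j
    simp only [Finset.mem_filter, Finset.mem_range, Finset.mem_Ico]
    rw [nat_div_eq_iff hd]
    have hN : (2:ℕ) ^ N = 2 ^ a * 2 ^ (N - a) := by
      rw [← pow_add]; congr 1; omega
    constructor
    · rintro ⟨_, h1, h2⟩; exact ⟨h1, h2⟩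
    · rintro ⟨h1, h2⟩
      refine ⟨?_, h1, h2⟩
      have : (mm + 1) * 2 ^ (N - a) ≤ 2 ^ a * 2 ^ (N - a) :=
        Nat.mul_le_mul_right _ hmm
      omega
  rw [hset, Nat.card_Ico]
  have : (mm + 1) * 2 ^ (N - a) - mm * 2 ^ (N - a) = 2 ^ (N - a) := by
    have : (mm + 1) * 2 ^ (N - a) = mm * 2 ^ (N - a) + 2 ^ (N - a) := by ring
    omega
  rw [this]
  push_cast
  ring

lemma exists_p {k k' : ℕ} (hk : inN2 k) (hk' : inN2 k') (hne : k ≠ k') :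
    ∃ p, p < max (Nat.size k) (Nat.size k') ∧ Nat.testBit k p ≠ Nat.testBit k' p ∧
      (twoBit k → lowExp k ≤ p) ∧ (twoBit k' → lowExp k' ≤ p) := by
  rcases hk with (rfl | ⟨a, rfl⟩) | ⟨a₁, a₂, h12, rfl⟩ <;>
    rcases hk' with (rfl | ⟨b, rfl⟩) | ⟨b₁, b₂, h12', rfl⟩
  · exact absurd rfl hne
  · refine ⟨b, ?_, ?_, fun ht => absurd ht not_twoBit_zero, fun ht => absurd ht (not_twoBit_pow b)⟩
    · simp only [Nat.size_zero, Nat.size_pow]; omega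
    · simp only [Nat.zero_testBit, Nat.testBit_two_pow]; simp
  · refine ⟨b₁, ?_, ?_, fun ht => absurd ht not_twoBit_zero,
      fun _ => by rw [lowExp_twoBit h12']; omega⟩
    · simp only [Nat.size_zero, size_twoBit h12']; omega
    · simp only [Nat.zero_testBit, testBit_twoBit h12', ne_eq, decide_eq_false_iff_not]
      simp
  · refine ⟨a, ?_, ?_, fun ht => absurd ht (not_twoBit_pow a), fun ht => absurd ht not_twoBit_zero⟩
    · simp only [Nat.size_zero, Nat.size_pow]; omega
    · simp only [Nat.zero_testBit, Nat.testBit_two_pow]; simp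
  · have hab : a ≠ b := fun h => hne (by rw [h])
    refine ⟨max a b, ?_, ?_, fun ht => absurd ht (not_twoBit_pow a),
      fun ht => absurd ht (not_twoBit_pow b)⟩
    · simp only [Nat.size_pow]; omega
    · simp only [Nat.testBit_two_pow, ne_eq, decide_eq_decide]; omega
  · by_cases hab : a = b₁
    · subst hab
      refine ⟨b₂, ?_, ?_, fun ht => absurd ht (not_twoBit_pow a),
        fun _ => le_of_eq (lowExp_twoBit h12')⟩
      · simp only [Nat.size_pow, size_twoBit h12']; omega
      · simp only [Nat.testBit_two_pow, testBit_twoBit h12', ne_eq, decide_eq_decide,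
          eq_self_iff_true, or_true, iff_true]; omega
    · refine ⟨max a b₁, ?_, ?_, fun ht => absurd ht (not_twoBit_pow a),
        fun _ => by rw [lowExp_twoBit h12']; omega⟩
      · simp only [Nat.size_pow, size_twoBit h12']; omega
      · simp only [Nat.testBit_two_pow, testBit_twoBit h12', ne_eq, decide_eq_decide]; omega
  · refine ⟨a₁, ?_, ?_, fun _ => by rw [lowExp_twoBit h12]; omega,
      fun ht => absurd ht not_twoBit_zero⟩
    · simp only [Nat.size_zero, size_twoBit h12]; omega
    · simp only [Nat.zero_testBit, testBit_twoBit h12, ne_eq]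
      simp
  · by_cases hab : b = a₁
    · subst hab
      refine ⟨a₂, ?_, ?_, fun _ => le_of_eq (lowExp_twoBit h12),
        fun ht => absurd ht (not_twoBit_pow b)⟩
      · simp only [Nat.size_pow, size_twoBit h12]; omega
      · simp only [Nat.testBit_two_pow, testBit_twoBit h12, ne_eq, decide_eq_decide,
          eq_self_iff_true, or_true, true_iff, iff_true]; omega
    · refine ⟨max b a₁, ?_, ?_, fun _ => by rw [lowExp_twoBit h12]; omega,
        fun ht => absurd ht (not_twoBit_pow b)⟩
      · simp only [Nat.size_pow, size_twoBit h12]; omega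
      · simp only [Nat.testBit_two_pow, testBit_twoBit h12, ne_eq, decide_eq_decide]; omega
  · by_cases h11 : a₁ = b₁
    · subst h11
      have h22 : a₂ ≠ b₂ := fun h => hne (by rw [h])
      refine ⟨max a₂ b₂, ?_, ?_, fun _ => by rw [lowExp_twoBit h12]; omega,
        fun _ => by rw [lowExp_twoBit h12']; omega⟩
      · simp only [size_twoBit h12, size_twoBit h12']; omega
      · simp only [testBit_twoBit h12, testBit_twoBit h12', ne_eq, decide_eq_decide]; omega
    · refine ⟨max a₁ b₁, ?_, ?_, fun _ => by rw [lowExp_twoBit h12]; omega,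
        fun _ => by rw [lowExp_twoBit h12']; omega⟩
      · simp only [size_twoBit h12, size_twoBit h12']; omega
      · simp only [testBit_twoBit h12, testBit_twoBit h12', ne_eq, decide_eq_decide]; omega

theorem stmt2 (k k' m m' : ℕ) (hk : inN2 k) (hk' : inN2 k')
    (hm : m ∈ L2 k) (hm' : m' ∈ L2 k') :
    (∫ x in (0:ℝ)..1, w2 k m x * w2 k' m' x) = if (k, m) = (k', m') then 1 else 0 := by
  classical
  set N := max (Nat.size k) (Nat.size k') with hNdef
  have hszk : Nat.size k ≤ N := le_max_left _ _
  have hszk' : Nat.size k' ≤ N := le_max_right _ _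
  have hlowkN : twoBit k → lowExp k ≤ N := fun ht => by
    have := lowExp_lt_size ht; omega
  have hlowk'N : twoBit k' → lowExp k' ≤ N := fun ht => by
    have := lowExp_lt_size ht; omega
  have h2N : (0:ℝ) < 2 ^ N := by positivity
  have hpieces : ∀ (j : ℕ), j < 2 ^ N →
      ∀ x ∈ Set.Ico ((j : ℝ) / 2 ^ N) (((j : ℝ) + 1) / 2 ^ N),
        w2 k m x * w2 k' m' x = pieceVal k m N j * pieceVal k' m' N j := by
    intro j hj x hx
    rw [w2_piece hszk hlowkN hj hx, w2_piece hszk' hlowk'N hj hx]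
  rw [integral_eq_sum hpieces]
  by_cases hdiag : (k, m) = (k', m')
  · rw [if_pos hdiag]
    obtain ⟨rfl, rfl⟩ := Prod.mk.injEq .. ▸ hdiag
    have hterm : ∀ j ∈ Finset.range (2 ^ N), pieceVal k m N j * pieceVal k m N j =
        (if twoBit k then (2:ℝ) ^ lowExp k *
            (if j / 2 ^ (N - lowExp k) = m then (1:ℝ) else 0) else 1) := by
      intro j _
      rw [pieceVal]
      have hpow : (-1:ℝ) ^ ebit k N j * (-1) ^ ebit k N j = 1 := by
        rw [← pow_add]; exact Even.neg_one_pow ⟨ebit k N j, rfl⟩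
      by_cases ht : twoBit k
      · simp only [ht, if_true]
        have hs : Real.sqrt (2 ^ lowExp k) * Real.sqrt (2 ^ lowExp k) = 2 ^ lowExp k :=
          Real.mul_self_sqrt (by positivity)
        by_cases hjm : j / 2 ^ (N - lowExp k) = m
        · simp only [hjm, if_true, mul_one]
          calc Real.sqrt (2 ^ lowExp k) * (-1:ℝ) ^ ebit k N j *
                (Real.sqrt (2 ^ lowExp k) * (-1:ℝ) ^ ebit k N j)
              = Real.sqrt (2 ^ lowExp k) * Real.sqrt (2 ^ lowExp k) *
                ((-1:ℝ) ^ ebit k N j * (-1) ^ ebit k N j) := by ring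
          _ = 2 ^ lowExp k := by rw [hs, hpow, mul_one]
        · simp [hjm]
      · simp only [ht, if_false, one_mul]
        exact hpow
    rw [Finset.sum_congr rfl hterm]
    by_cases ht : twoBit k
    · simp only [ht, if_true]
      have hmlt : m < 2 ^ lowExp k := by
        have := hm; rw [L2, if_pos ht] at this; exact this
      rw [← Finset.mul_sum, sum_indicator_div (hlowkN ht) hmlt]
      rw [← pow_add]
      have : lowExp k + (N - lowExp k) = N := by
        have := hlowkN ht; omega
      rw [this, div_self h2N.ne']
    · simp only [ht, if_false]
      rw [Finset.sum_const, Finset.card_range, nsmul_eq_mul, mul_one]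
      rw [show ((2 ^ N : ℕ) : ℝ) = 2 ^ N by push_cast; ring, div_self h2N.ne']
  · rw [if_neg hdiag]
    by_cases hkk : k = k'
    · subst hkk
      have hmm : m ≠ m' := fun h => hdiag (by rw [h])
      by_cases ht : twoBit k
      · have hzero : ∀ j ∈ Finset.range (2 ^ N),
            pieceVal k m N j * pieceVal k m' N j = 0 := by
          intro j _
          rw [pieceVal, pieceVal]
          simp only [ht, if_true]
          by_cases h1 : j / 2 ^ (N - lowExp k) = m
          · have h2 : ¬ (j / 2 ^ (N - lowExp k) = m') := by rw [h1]; exact hmm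
            simp [h2]
          · simp [h1]
        rw [Finset.sum_congr rfl hzero, Finset.sum_const, smul_zero, zero_div]
      · exfalso
        apply hmm
        have h1 := hm; have h2 := hm'
        rw [L2, if_neg ht] at h1 h2
        simp only [Set.mem_singleton_iff] at h1 h2
        rw [h1, h2]
    · obtain ⟨p, hpmax, hpne, hpk, hpk'⟩ := exists_p hk hk' hkk
      have hpN : p < N := hpmax
      have hsum : ∑ j ∈ Finset.range (2 ^ N),
          pieceVal k m N j * pieceVal k' m' N j = 0 := by
        apply Finset.sum_involution (fun j _ => j ^^^ 2 ^ (N - 1 - p))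
        · intro j hj
          have key : ∀ (kk mm : ℕ), (twoBit kk → lowExp kk ≤ p) →
              pieceVal kk mm N (j ^^^ 2 ^ (N - 1 - p)) =
                pieceVal kk mm N j * (-1:ℝ) ^ (Nat.testBit kk p).toNat := by
            intro kk mm hkkp
            rw [pieceVal, pieceVal, ebit_xor_flip hpN]
            by_cases htt : twoBit kk
            · simp only [htt, if_true]
              rw [div_xor (show N - 1 - p < N - lowExp kk by
                have := hkkp htt; omega)]
              ring
            · simp only [htt, if_false]; ring
          rw [key k m hpk, key k' m' hpk']
          have hsgn : (-1:ℝ) ^ (Nat.testBit k p).toNat * (-1) ^ (Nat.testBit k' p).toNat = -1 := by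
            rcases hkp : Nat.testBit k p <;> rcases hk'p : Nat.testBit k' p <;>
              simp_all
          linear_combination (pieceVal k m N j * pieceVal k' m' N j) * hsgn
        · intro j hj hne0 heq
          have := congrArg (fun t => Nat.testBit t (N - 1 - p)) heq
          simp only [Nat.testBit_xor, Nat.testBit_two_pow, decide_eq_true_eq] at this
          simp at this
        · intro j hj
          simp [Nat.xor_assoc]
        · intro j hj
          refine Finset.mem_range.2 (xor_two_pow_lt ?_ (Finset.mem_range.1 hj))
          omega
      rw [hsum, zero_div]

end
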